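/- Let A be a Banach algebra with a bounded left approximate identity, and D : A → A* a surjective bounded derivation such that D'' : A** → A*** is a derivation. Then A is reflexive. -/

import Mathlib

open ContinuousLinearMap NormedSpace Filter Topology Metric

noncomputable section

/-- The topological dual of a normed space `E` (the older Mathlib's `NormedSpace.Dual`,
since removed from Mathlib in favour of `StrongDual`). -/
def NormedSpace.Dual (𝕜 : Type*) [NontriviallyNormedField 𝕜] (E : Type*)
    [NormedAddCommGroup E] [NormedSpace 𝕜 E] : Type _ :=
  E →L[𝕜] 𝕜

instance NormedSpace.Dual.instNormedAddCommGroup (𝕜 : Type*) [NontriviallyNormedField 𝕜]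
    (E : Type*) [NormedAddCommGroup E] [NormedSpace 𝕜 E] :
    NormedAddCommGroup (NormedSpace.Dual 𝕜 E) :=
  ContinuousLinearMap.toNormedAddCommGroup

instance NormedSpace.Dual.instNormedSpace (𝕜 : Type*) [NontriviallyNormedField 𝕜]
    (E : Type*) [NormedAddCommGroup E] [NormedSpace 𝕜 E] :
    NormedSpace 𝕜 (NormedSpace.Dual 𝕜 E) :=
  ContinuousLinearMap.toNormedSpace

instance NormedSpace.Dual.instFunLike (𝕜 : Type*) [NontriviallyNormedField 𝕜]
    (E : Type*) [NormedAddCommGroup E] [NormedSpace 𝕜 E] :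
    FunLike (NormedSpace.Dual 𝕜 E) E 𝕜 :=
  ContinuousLinearMap.funLike

instance NormedSpace.Dual.instContinuousLinearMapClass (𝕜 : Type*) [NontriviallyNormedField 𝕜]
    (E : Type*) [NormedAddCommGroup E] [NormedSpace 𝕜 E] :
    ContinuousLinearMapClass (NormedSpace.Dual 𝕜 E) 𝕜 E 𝕜 :=
  ContinuousLinearMap.continuousSemilinearMapClass

instance NormedSpace.Dual.instInhabited (𝕜 : Type*) [NontriviallyNormedField 𝕜]
    (E : Type*) [NormedAddCommGroup E] [NormedSpace 𝕜 E] :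
    Inhabited (NormedSpace.Dual 𝕜 E) :=
  ⟨0⟩

namespace Arens

section Bilinear

variable {X Y Z : Type*} [NormedAddCommGroup X] [NormedSpace ℂ X]
  [NormedAddCommGroup Y] [NormedSpace ℂ Y] [NormedAddCommGroup Z] [NormedSpace ℂ Z]

/-- The Arens adjoint `m*` of a bounded bilinear map `m : X × Y → Z`,
`⟨m*(z',x), y⟩ = ⟨z', m(x,y)⟩`. -/
def adj (f : X →L[ℂ] Y →L[ℂ] Z) : Dual ℂ Z →L[ℂ] X →L[ℂ] Dual ℂ Y :=
  ((ContinuousLinearMap.compL ℂ X (Y →L[ℂ] Z) (Y →L[ℂ] ℂ)).flip f).comp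
    (ContinuousLinearMap.compL ℂ Y Z ℂ)

@[simp] lemma adj_apply (f : X →L[ℂ] Y →L[ℂ] Z) (z' : Dual ℂ Z) (x : X) (y : Y) :
    adj f z' x y = z' (f x y) := rfl

/-- The Arens triple-adjoint extension `m*** : X** × Y** → Z**` of a bounded
bilinear map `m : X × Y → Z`. -/
def ext3 (f : X →L[ℂ] Y →L[ℂ] Z) :
    Dual ℂ (Dual ℂ X) →L[ℂ] Dual ℂ (Dual ℂ Y) →L[ℂ] Dual ℂ (Dual ℂ Z) :=
  adj (adj (adj f))

/-- Weak-star convergence of a net `(a i)` of `X` (canonically embedded in `X**`)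
to an element `F` of the bidual `X**`. -/
def WStarTendsto {ι : Type*} (a : ι → X) (l : Filter ι) (F : Dual ℂ (Dual ℂ X)) : Prop :=
  ∀ x' : Dual ℂ X, Tendsto (fun i => x' (a i)) l (𝓝 (F x'))

end Bilinear

section Algebra

variable (A : Type*) [NonUnitalNormedRing A] [NormedSpace ℂ A]
  [IsScalarTower ℂ A A] [SMulCommClass ℂ A A]

/-- The multiplication of a (non-unital) Banach algebra as a bounded bilinear map. -/
abbrev mulCLM : A →L[ℂ] A →L[ℂ] A := ContinuousLinearMap.mul ℂ A

/-- The first Arens product on the bidual `A**`. -/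
def fstArens (F G : Dual ℂ (Dual ℂ A)) : Dual ℂ (Dual ℂ A) := ext3 (mulCLM A) F G

/-- The second Arens product on the bidual `A**` (`m^{t***t}`). -/
def sndArens (F G : Dual ℂ (Dual ℂ A)) : Dual ℂ (Dual ℂ A) :=
  ext3 ((mulCLM A).flip) G F

/-- A Banach algebra is Arens regular when its two Arens products coincide. -/
def ArensRegular : Prop := ∀ F G : Dual ℂ (Dual ℂ A), fstArens A F G = sndArens A F G

end Algebra

section ModuleWC

universe u
variable {A : Type u} {B : Type*} [NonUnitalNormedRing A] [NormedSpace ℂ A]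
  [NormedAddCommGroup B] [NormedSpace ℂ B]

/-- For a left Banach `A`-module action `πl` on `B`, the element `b' a ∈ B*`,
`⟨b' a, b⟩ = ⟨b', a • b⟩`. -/
def dualSmulL (πl : A →L[ℂ] B →L[ℂ] B) (b' : Dual ℂ B) (a : A) : Dual ℂ B := adj πl b' a

/-- The Arens extension `b' a'' ∈ B***`, `⟨b'', b' a''⟩ = ⟨π_ℓ***(a'', b''), b'⟩`. -/
def dualSmulLStar (πl : A →L[ℂ] B →L[ℂ] B) (b' : Dual ℂ B) (F : Dual ℂ (Dual ℂ A)) :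
    Dual ℂ (Dual ℂ (Dual ℂ B)) :=
  (inclusionInDoubleDual ℂ (Dual ℂ B) b').comp (ext3 πl F)

/-- `b' ∈ B*` has the left-weak*-weak convergence property (`Lw*wc`) with respect to `A`:
for every net `(a_α) ⊆ A` with `a_α → a''` weak* in `A**`, the net `b' a_α` converges
weakly to `b' a''` in `B*`. -/
def LWStarWC (πl : A →L[ℂ] B →L[ℂ] B) (b' : Dual ℂ B) : Prop :=
  ∀ (ι : Type u) (l : Filter ι) (a : ι → A) (F : Dual ℂ (Dual ℂ A)),
    WStarTendsto a l F →
    ∀ b'' : Dual ℂ (Dual ℂ B),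
      Tendsto (fun i => b'' (dualSmulL πl b' (a i))) l (𝓝 (dualSmulLStar πl b' F b''))

/-- For a right Banach `A`-module action `πr` on `B`, the element `a b' ∈ B*`,
`⟨a b', b⟩ = ⟨b', b • a⟩`. -/
def dualSmulR (πr : B →L[ℂ] A →L[ℂ] B) (a : A) (b' : Dual ℂ B) : Dual ℂ B :=
  adj πr.flip b' a

/-- The Arens extension `a'' b' ∈ B***`, `⟨b'', a'' b'⟩ = ⟨π_r^{t***}(a'', b''), b'⟩`. -/
def dualSmulRStar (πr : B →L[ℂ] A →L[ℂ] B) (F : Dual ℂ (Dual ℂ A)) (b' : Dual ℂ B) :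
    Dual ℂ (Dual ℂ (Dual ℂ B)) :=
  (inclusionInDoubleDual ℂ (Dual ℂ B) b').comp (ext3 πr.flip F)

/-- `b' ∈ B*` has the right-weak*-weak convergence property (`Rw*wc`) with respect to `A`. -/
def RWStarWC (πr : B →L[ℂ] A →L[ℂ] B) (b' : Dual ℂ B) : Prop :=
  ∀ (ι : Type u) (l : Filter ι) (a : ι → A) (F : Dual ℂ (Dual ℂ A)),
    WStarTendsto a l F →
    ∀ b'' : Dual ℂ (Dual ℂ B),
      Tendsto (fun i => b'' (dualSmulR πr (a i) b')) l (𝓝 (dualSmulRStar πr F b' b''))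

end ModuleWC

section AlgebraWC

variable (A : Type u) [NonUnitalNormedRing A] [NormedSpace ℂ A]
  [IsScalarTower ℂ A A] [SMulCommClass ℂ A A]

/-- The product `a'' a' ∈ A*` (first step of the first Arens product):
`⟨a'' a', a⟩ = ⟨a'', a' a⟩` where `⟨a' a, b⟩ = ⟨a', a b⟩`. -/
def biSmul (F : Dual ℂ (Dual ℂ A)) (a' : Dual ℂ A) : Dual ℂ A :=
  F.comp (adj (mulCLM A) a')

/-- The element `a · a' ∈ A*`, `⟨a a', b⟩ = ⟨a', b a⟩`. -/
def leftMulDual (a : A) (a' : Dual ℂ A) : Dual ℂ A := a'.comp ((mulCLM A).flip a)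

/-- `A*` has the `Rw*wc`-property with respect to `A`: for every `a' ∈ A*` and every net
`(a_α) ⊆ A` with `a_α → a''` weak* in `A**`, the net `a_α a'` (`⟨a_α a', b⟩ = ⟨a', b a_α⟩`)
converges weakly in `A*` to `a'' a'`. -/
def RWStarWCDualProp : Prop :=
  ∀ (a' : Dual ℂ A) (ι : Type u) (l : Filter ι) (a : ι → A) (F : Dual ℂ (Dual ℂ A)),
    WStarTendsto a l F →
    ∀ x'' : Dual ℂ (Dual ℂ A),
      Tendsto (fun i => x'' (leftMulDual A (a i) a')) l (𝓝 (x'' (biSmul A F a')))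

/-- `A*` has the `Lw*wc`-property with respect to `A`. -/
def LWStarWCDualProp : Prop := ∀ a' : Dual ℂ A, LWStarWC (mulCLM A) a'

/-- `A**` has the `Lw*wc`-property with respect to `A`: for every `x'' ∈ A**` and every net
`(a_α) ⊆ A` with `a_α → a''` weak* in `A**`, the net `x'' a_α` converges weakly in `A**`
to `x'' a''`. -/
def LWStarWCBidualProp : Prop :=
  ∀ (x'' : Dual ℂ (Dual ℂ A)) (ι : Type u) (l : Filter ι) (a : ι → A) (F : Dual ℂ (Dual ℂ A)),
    WStarTendsto a l F →
    ∀ Φ : Dual ℂ (Dual ℂ (Dual ℂ A)),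
      Tendsto (fun i => Φ (fstArens A x'' (inclusionInDoubleDual ℂ A (a i)))) l
        (𝓝 (Φ (fstArens A x'' F)))

/-- `D : A → A*` is a derivation: `D(ab) = a·D(b) + D(a)·b`, where
`(a·f)(x) = f(x a)` and `(f·b)(x) = f(b x)`. -/
def IsDerivation (D : A →L[ℂ] Dual ℂ A) : Prop :=
  ∀ a b : A, D (a * b) = (D b).comp ((mulCLM A).flip a) + (D a).comp (mulCLM A b)

/-- `A` is weakly amenable: every bounded derivation `D : A → A*` is inner. -/
def WeaklyAmenable : Prop :=
  ∀ D : A →L[ℂ] Dual ℂ A, IsDerivation A D →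
    ∃ f : Dual ℂ A, ∀ a : A, D a = f.comp ((mulCLM A).flip a) - f.comp (mulCLM A a)

/-- The left action of `A**` (with the first Arens product) on `A***`:
`(F·Φ)(G) = Φ(G F)`. -/
def ddLeftAct (F : Dual ℂ (Dual ℂ A)) (Φ : Dual ℂ (Dual ℂ (Dual ℂ A))) :
    Dual ℂ (Dual ℂ (Dual ℂ A)) :=
  Φ.comp ((ext3 (mulCLM A)).flip F)

/-- The right action of `A**` (with the first Arens product) on `A***`:
`(Φ·F)(G) = Φ(F G)`. -/
def ddRightAct (F : Dual ℂ (Dual ℂ A)) (Φ : Dual ℂ (Dual ℂ (Dual ℂ A))) :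
    Dual ℂ (Dual ℂ (Dual ℂ A)) :=
  Φ.comp (ext3 (mulCLM A) F)

/-- A bounded map `D : A** → A***` is a derivation for the first Arens product. -/
def IsDerivationDD (D : Dual ℂ (Dual ℂ A) →L[ℂ] Dual ℂ (Dual ℂ (Dual ℂ A))) : Prop :=
  ∀ F G : Dual ℂ (Dual ℂ A),
    D (fstArens A F G) = ddLeftAct A F (D G) + ddRightAct A G (D F)

/-- `A**` (with the first Arens product) is weakly amenable. -/
def WeaklyAmenableDD : Prop :=
  ∀ D : Dual ℂ (Dual ℂ A) →L[ℂ] Dual ℂ (Dual ℂ (Dual ℂ A)), IsDerivationDD A D →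
    ∃ Φ : Dual ℂ (Dual ℂ (Dual ℂ A)), ∀ F, D F = ddLeftAct A F Φ - ddRightAct A F Φ

/-- `A*** A** ⊆ A*`: each product `x''' x''` (`⟨x''' x'', a''⟩ = ⟨x''', x'' a''⟩`)
lies in the canonical image of `A*` in `A***`. -/
def TripleDualMulIntoDual : Prop :=
  ∀ (Φ : Dual ℂ (Dual ℂ (Dual ℂ A))) (F : Dual ℂ (Dual ℂ A)),
    ∃ a' : Dual ℂ A, ddRightAct A F Φ = inclusionInDoubleDual ℂ (Dual ℂ A) a'

end AlgebraWC

section DualMap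

variable {X Y : Type*} [NormedAddCommGroup X] [NormedSpace ℂ X]
  [NormedAddCommGroup Y] [NormedSpace ℂ Y]

/-- The Banach-space adjoint of a bounded operator. -/
def dualMap' (T : X →L[ℂ] Y) : Dual ℂ Y →L[ℂ] Dual ℂ X :=
  (ContinuousLinearMap.compL ℂ X Y ℂ).flip T

/-- The second adjoint `D'' : A** → A***` of `D : A → A*`. -/
def secondAdjoint {A : Type*} [NonUnitalNormedRing A] [NormedSpace ℂ A]
    (D : A →L[ℂ] Dual ℂ A) :
    Dual ℂ (Dual ℂ A) →L[ℂ] Dual ℂ (Dual ℂ (Dual ℂ A)) :=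
  dualMap' (dualMap' D)

end DualMap

section Biregular

variable (A B : Type*) [NonUnitalNormedRing A] [NormedSpace ℂ A]
  [NonUnitalNormedRing B] [NormedSpace ℂ B]

/-- A bounded bilinear form `m : A × B → ℂ` is biregular (Ülger): for any sequences
`(a_i), (aa2_j)` in the unit ball of `A` and `(b_i), (bb_j)` in the unit ball of `B`,
the two iterated limits of `m(a_i aa2_j, b_i bb_j)` coincide whenever both exist. -/
def Biregular (m : A →L[ℂ] B →L[ℂ] ℂ) : Prop :=
  ∀ (a aa2 : ℕ → A) (b bb : ℕ → B),
    (∀ i, ‖a i‖ ≤ 1) → (∀ j, ‖aa2 j‖ ≤ 1) → (∀ i, ‖b i‖ ≤ 1) → (∀ j, ‖bb j‖ ≤ 1) →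
    ∀ (g h : ℕ → ℂ) (L L' : ℂ),
      (∀ i, Tendsto (fun j => m (a i * aa2 j) (b i * bb j)) atTop (𝓝 (g i))) →
      Tendsto g atTop (𝓝 L) →
      (∀ j, Tendsto (fun i => m (a i * aa2 j) (b i * bb j)) atTop (𝓝 (h j))) →
      Tendsto h atTop (𝓝 L') → L = L'

/-- Arens regularity of the projective tensor product `A ⊗̂ B`.  By Ülger's theorem
(`[22, Theorem 3.4]`), `A ⊗̂ B` is Arens regular if and only if every bounded bilinear
form `m : A × B → ℂ` is biregular; since the dual of `A ⊗̂ B` is exactly the space of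
bounded bilinear forms on `A × B`, we take this equivalent characterization as the
formalization of Arens regularity of `A ⊗̂ B`. -/
def ProjArensRegular : Prop := ∀ m : A →L[ℂ] B →L[ℂ] ℂ, Biregular A B m

end Biregular

end Arens


@[ext] lemma ArensAux.dual_ext {E : Type*} [NormedAddCommGroup E] [NormedSpace ℂ E]
    {f g : NormedSpace.Dual ℂ E} (h : ∀ x, f x = g x) : f = g :=
  ContinuousLinearMap.ext h

instance ArensAux.instCompleteSpaceDual {E : Type*} [NormedAddCommGroup E] [NormedSpace ℂ E] :
    CompleteSpace (NormedSpace.Dual ℂ E) :=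
  inferInstanceAs (CompleteSpace (E →L[ℂ] ℂ))

section ArensAux

open Arens NormedSpace

variable {A : Type*} [NonUnitalNormedRing A] [NormedSpace ℂ A]
  [IsScalarTower ℂ A A] [SMulCommClass ℂ A A]

lemma ArensAux.biSmul_eq (G : Dual ℂ (Dual ℂ A)) (f : Dual ℂ A) :
    adj (adj (mulCLM A)) G f = biSmul A G f := by
  ext a; rfl

lemma ArensAux.fstArens_apply (F G : Dual ℂ (Dual ℂ A)) (f : Dual ℂ A) :
    fstArens A F G f = F (biSmul A G f) := by
  rw [← ArensAux.biSmul_eq]; rfl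

lemma ArensAux.biSmul_apply (G : Dual ℂ (Dual ℂ A)) (f : Dual ℂ A) (x : A) :
    biSmul A G f x = G (adj (mulCLM A) f x) := rfl

lemma ArensAux.dualMap'_apply {X Y : Type*} [NormedAddCommGroup X] [NormedSpace ℂ X]
    [NormedAddCommGroup Y] [NormedSpace ℂ Y] (T : X →L[ℂ] Y) (g : Dual ℂ Y) (x : X) :
    dualMap' T g x = g (T x) := rfl

lemma ArensAux.secondAdjoint_apply (D : A →L[ℂ] Dual ℂ A) (H : Dual ℂ (Dual ℂ A))
    (X : Dual ℂ (Dual ℂ A)) :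
    secondAdjoint D H X = H (dualMap' D X) := rfl

/-- Evaluated form of the hypothesis that `D''` is a derivation. -/
lemma ArensAux.star_id (D : A →L[ℂ] Dual ℂ A)
    (hD'' : IsDerivationDD A (secondAdjoint D)) (F G K : Dual ℂ (Dual ℂ A)) :
    fstArens A F G (dualMap' D K)
      = G (dualMap' D (fstArens A K F)) + F (dualMap' D (fstArens A G K)) := by
  have h := congrArg (fun Φ : Dual ℂ (Dual ℂ (Dual ℂ A)) => Φ K) (hD'' F G)
  exact h

/-- The second adjoint of a surjective bounded operator between Banach spaces
is surjective. -/
lemma ArensAux.dualMap'_dualMap'_surjective {X Y : Type*}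
    [NormedAddCommGroup X] [NormedSpace ℂ X] [CompleteSpace X]
    [NormedAddCommGroup Y] [NormedSpace ℂ Y] [CompleteSpace Y]
    (T : X →L[ℂ] Y) (hT : Function.Surjective T) :
    Function.Surjective (dualMap' (dualMap' T)) := by
  obtain ⟨c, hc0, hc⟩ := T.exists_preimage_norm_le hT
  have hlow : ∀ g : Dual ℂ Y, ‖g‖ ≤ c * ‖dualMap' T g‖ := by
    intro g
    refine g.opNorm_le_bound (by positivity) (fun y => ?_)
    obtain ⟨x, hx, hxn⟩ := hc y
    calc ‖g y‖ = ‖dualMap' T g x‖ := by rw [ArensAux.dualMap'_apply, hx]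
      _ ≤ ‖dualMap' T g‖ * ‖x‖ := (dualMap' T g).le_opNorm x
      _ ≤ ‖dualMap' T g‖ * (c * ‖y‖) :=
        mul_le_mul_of_nonneg_left hxn (norm_nonneg _)
      _ = c * ‖dualMap' T g‖ * ‖y‖ := by ring
  have hinj : Function.Injective (dualMap' T) := by
    intro g₁ g₂ h12
    have h := hlow (g₁ - g₂)
    rw [map_sub, h12, sub_self, norm_zero, mul_zero] at h
    exact sub_eq_zero.1 (norm_le_zero_iff.1 h)
  intro ψ
  set f := ((dualMap' T : Dual ℂ Y →L[ℂ] Dual ℂ X) : Dual ℂ Y →ₗ[ℂ] Dual ℂ X) with hf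
  have hinj' : Function.Injective f := hinj
  let eqv : Dual ℂ Y ≃ₗ[ℂ] LinearMap.range f := LinearEquiv.ofInjective f hinj'
  have heqv : ∀ g : Dual ℂ Y, ((eqv g : Dual ℂ X)) = dualMap' T g := fun g => rfl
  let φlin : (LinearMap.range f : Submodule ℂ (Dual ℂ X)) →ₗ[ℂ] ℂ :=
    ψ.toLinearMap ∘ₗ (eqv.symm : (LinearMap.range f) →ₗ[ℂ] Dual ℂ Y)
  have hbound : ∀ x : (LinearMap.range f : Submodule ℂ (Dual ℂ X)),
      ‖φlin x‖ ≤ (‖ψ‖ * c) * ‖x‖ := by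
    intro x
    have hx : dualMap' T (eqv.symm x) = (x : Dual ℂ X) := by
      rw [← heqv (eqv.symm x), eqv.apply_symm_apply]
    calc ‖φlin x‖ = ‖ψ (eqv.symm x)‖ := rfl
      _ ≤ ‖ψ‖ * ‖eqv.symm x‖ := ψ.le_opNorm _
      _ ≤ ‖ψ‖ * (c * ‖dualMap' T (eqv.symm x)‖) :=
        mul_le_mul_of_nonneg_left (hlow _) (norm_nonneg _)
      _ = (‖ψ‖ * c) * ‖x‖ := by rw [hx, Submodule.norm_coe]; ring
  let φ₀ : (LinearMap.range f : Submodule ℂ (Dual ℂ X)) →L[ℂ] ℂ :=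
    LinearMap.mkContinuous φlin (‖ψ‖ * c) hbound
  obtain ⟨φ, hφ, -⟩ := exists_extension_norm_eq (LinearMap.range f) φ₀
  refine ⟨φ, ?_⟩
  ext g
  have hmem : dualMap' T g ∈ LinearMap.range f := ⟨g, rfl⟩
  have h1 : dualMap' (dualMap' T) φ g = φ (dualMap' T g) := rfl
  have h2 := hφ ⟨dualMap' T g, hmem⟩
  have h3 : eqv.symm ⟨dualMap' T g, hmem⟩ = g := by
    have : (⟨dualMap' T g, hmem⟩ : LinearMap.range f) = eqv g := by
      exact Subtype.ext (heqv g).symm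
    rw [this, eqv.symm_apply_apply]
  have h4 : φ₀ ⟨dualMap' T g, hmem⟩ = ψ g := by
    show ψ (eqv.symm ⟨dualMap' T g, hmem⟩) = ψ g
    rw [h3]
  rw [h1, h2, h4]

end ArensAux

/-- **Theorem 3-5 (4).** If `A` has a bounded left approximate identity and `D : A → A*`
is a surjective bounded derivation whose second adjoint `D''` is a derivation, then `A`
is reflexive. -/
theorem reflexive_of_surjective_derivation_of_bai
    {A : Type*} [NonUnitalNormedRing A] [NormedSpace ℂ A]
    [IsScalarTower ℂ A A] [SMulCommClass ℂ A A] [CompleteSpace A]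
    -- a bounded left approximate identity:
    {ι : Type*} (l : Filter ι) [l.NeBot] (e : ι → A) (C : ℝ)
    (hbdd : ∀ i, ‖e i‖ ≤ C)
    (hbai : ∀ a : A, Tendsto (fun i => e i * a) l (𝓝 a))
    (D : A →L[ℂ] Dual ℂ A) (hD : Arens.IsDerivation A D)
    (hsurj : Function.Surjective D)
    (hD'' : Arens.IsDerivationDD A (Arens.secondAdjoint D)) :
    Function.Surjective (NormedSpace.inclusionInDoubleDual ℂ A) := by
  classical
  -- a weak-star cluster point of the approximate identity, as an ultrafilter limit
  let U : Ultrafilter ι := Ultrafilter.of l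
  have hUl : (U : Filter ι) ≤ l := Ultrafilter.of_le l
  set C' : ℝ := max C 0 with hC'def
  have hC' : ∀ i, ‖e i‖ ≤ C' := fun i => (hbdd i).trans (le_max_left _ _)
  have hex : ∀ f : Dual ℂ A, ∃ x : ℂ,
      Tendsto (fun i => f (e i)) (U : Filter ι) (𝓝 x) := by
    intro f
    have hcomp : IsCompact (Metric.closedBall (0 : ℂ) (‖f‖ * C')) :=
      isCompact_closedBall _ _
    have hle : ↑(U.map fun i => f (e i)) ≤ 𝓟 (Metric.closedBall (0 : ℂ) (‖f‖ * C')) := by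
      rw [Ultrafilter.coe_map]
      refine le_principal_iff.2 (Filter.mem_map.2 (Filter.univ_mem' fun i => ?_))
      simp only [Set.mem_preimage, Metric.mem_closedBall, dist_zero_right]
      calc ‖f (e i)‖ ≤ ‖f‖ * ‖e i‖ := f.le_opNorm _
        _ ≤ ‖f‖ * C' := mul_le_mul_of_nonneg_left (hC' i) (norm_nonneg f)
    obtain ⟨x, -, hx⟩ := hcomp.ultrafilter_le_nhds (U.map fun i => f (e i)) hle
    exact ⟨x, by rwa [Ultrafilter.coe_map] at hx⟩
  have hE0 : ∀ f : Dual ℂ A, Tendsto (fun i => f (e i)) (U : Filter ι)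
      (𝓝 (limUnder (U : Filter ι) fun i => f (e i))) :=
    fun f => tendsto_nhds_limUnder (hex f)
  let E0 : Dual ℂ A →ₗ[ℂ] ℂ :=
    { toFun := fun f => limUnder (U : Filter ι) fun i => f (e i)
      map_add' := fun f g =>
        tendsto_nhds_unique (by exact hE0 (f + g)) ((hE0 f).add (hE0 g))
      map_smul' := fun c f =>
        tendsto_nhds_unique (by simpa using hE0 (c • f))
          (by exact (hE0 f).const_mul c) }
  have hE0bound : ∀ f : Dual ℂ A, ‖E0 f‖ ≤ C' * ‖f‖ := by
    intro f
    refine le_of_tendsto' (hE0 f).norm fun i => ?_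
    calc ‖f (e i)‖ ≤ ‖f‖ * ‖e i‖ := f.le_opNorm _
      _ ≤ ‖f‖ * C' := mul_le_mul_of_nonneg_left (hC' i) (norm_nonneg f)
      _ = C' * ‖f‖ := mul_comm _ _
  let E : Dual ℂ (Dual ℂ A) := LinearMap.mkContinuous E0 C' hE0bound
  have hEt : ∀ f : Dual ℂ A, Tendsto (fun i => f (e i)) (U : Filter ι) (𝓝 (E f)) := hE0
  -- `E` is a left unit on the canonical image of `A`
  have hEunit0 : ∀ (a : A) (f : Dual ℂ A),
      Arens.fstArens A E (inclusionInDoubleDual ℂ A a) f = f a := by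
    intro a f
    have h2 : ∀ x : A,
        Arens.biSmul A (inclusionInDoubleDual ℂ A a) f x = f (x * a) := fun x => rfl
    have h3 := hEt (Arens.biSmul A (inclusionInDoubleDual ℂ A a) f)
    have h3' : Tendsto (fun i => f (e i * a)) (U : Filter ι)
        (𝓝 (E (Arens.biSmul A (inclusionInDoubleDual ℂ A a) f))) := by
      simpa only [h2] using h3
    have h4 : Tendsto (fun i => f (e i * a)) (U : Filter ι) (𝓝 (f a)) :=
      ((f.continuous.tendsto a).comp (hbai a)).mono_left hUl
    change E (Arens.biSmul A (inclusionInDoubleDual ℂ A a) f) = f a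
    exact tendsto_nhds_unique h3' h4
  -- `A*** ⬝ E ⊆ A*` via the derivation hypotheses
  have hDD : Function.Surjective (Arens.secondAdjoint D) :=
    ArensAux.dualMap'_dualMap'_surjective D hsurj
  have hTDM : ∀ Φ : Dual ℂ (Dual ℂ (Dual ℂ A)), ∃ s : Dual ℂ A,
      ∀ G : Dual ℂ (Dual ℂ A), Φ (Arens.fstArens A E G) = G s := by
    intro Φ
    obtain ⟨H, hH⟩ := hDD Φ
    refine ⟨Arens.biSmul A H (Arens.dualMap' D E)
      - Arens.dualMap' D (Arens.fstArens A H E), fun G => ?_⟩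
    have hst := ArensAux.star_id D hD'' G H E
    have hst' : G (Arens.biSmul A H (Arens.dualMap' D E))
        = H (Arens.dualMap' D (Arens.fstArens A E G))
          + G (Arens.dualMap' D (Arens.fstArens A H E)) := by
      rw [← ArensAux.fstArens_apply]; exact hst
    have hΦ : Φ (Arens.fstArens A E G)
        = H (Arens.dualMap' D (Arens.fstArens A E G)) := by
      rw [← hH]; rfl
    rw [hΦ, map_sub]
    linear_combination -hst'
  -- `E` is a left unit for the first Arens product
  have hEunit : ∀ G : Dual ℂ (Dual ℂ A), Arens.fstArens A E G = G := by
    intro G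
    ext f
    obtain ⟨s, hs⟩ := hTDM (inclusionInDoubleDual ℂ (Dual ℂ A) f)
    have hsf : s = f := by
      ext a
      have h1 := hs (inclusionInDoubleDual ℂ A a)
      change Arens.fstArens A E (inclusionInDoubleDual ℂ A a) f = s a at h1
      rw [hEunit0 a f] at h1
      exact h1.symm
    have h2 := hs G
    change Arens.fstArens A E G f = G s at h2
    rw [hsf] at h2
    exact h2
  -- hence every element of `A***` is weak-star continuous
  have hsurj3 : ∀ Φ : Dual ℂ (Dual ℂ (Dual ℂ A)), ∃ s : Dual ℂ A,
      ∀ G : Dual ℂ (Dual ℂ A), Φ G = G s := by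
    intro Φ
    obtain ⟨s, hs⟩ := hTDM Φ
    refine ⟨s, fun G => ?_⟩
    have h := hs G
    rwa [hEunit G] at h
  -- conclude by Hahn–Banach separation from the closed range of the canonical embedding
  refine fun (F : Dual ℂ (Dual ℂ A)) => ?_
  by_contra hF
  push_neg at hF
  set p : Submodule ℂ (Dual ℂ (Dual ℂ A)) :=
    LinearMap.range ((inclusionInDoubleDual ℂ A).toLinearMap : A →ₗ[ℂ] Dual ℂ (Dual ℂ A)) with hp
  have hFmem : F ∉ p := by
    intro hmem
    obtain ⟨a, ha⟩ := hmem
    exact hF a ha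
  haveI hclosed : IsClosed (p : Set (Dual ℂ (Dual ℂ A))) := by
    have h1 : (p : Set (Dual ℂ (Dual ℂ A)))
        = Set.range (inclusionInDoubleDualLi ℂ (E := A)) := by
      rw [hp]
      exact LinearMap.coe_range _
    rw [h1]
    exact ((inclusionInDoubleDualLi ℂ (E := A)).isometry.isUniformInducing.isComplete_range).isClosed
  have hne : (Submodule.Quotient.mk F : (Dual ℂ (Dual ℂ A)) ⧸ p) ≠ 0 := by
    simpa [Submodule.Quotient.mk_eq_zero] using hFmem
  obtain ⟨g, -, hg2⟩ := exists_dual_vector ℂ (Submodule.Quotient.mk F :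
    (Dual ℂ (Dual ℂ A)) ⧸ p) (norm_ne_zero_iff.mpr hne)
  let mkCLM : Dual ℂ (Dual ℂ A) →L[ℂ] (Dual ℂ (Dual ℂ A)) ⧸ p :=
    LinearMap.mkContinuous p.mkQ 1
      (fun x => by simpa using Submodule.Quotient.norm_mk_le p x)
  let Φ : Dual ℂ (Dual ℂ (Dual ℂ A)) := g.comp mkCLM
  obtain ⟨s, hs⟩ := hsurj3 Φ
  have hs0 : s = 0 := by
    ext a
    have h1 := hs (inclusionInDoubleDual ℂ A a)
    have h2 : Φ (inclusionInDoubleDual ℂ A a) = 0 := by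
      have hmem : inclusionInDoubleDual ℂ A a ∈ p := ⟨a, rfl⟩
      have : mkCLM (inclusionInDoubleDual ℂ A a) = 0 := by
        exact (Submodule.Quotient.mk_eq_zero p).2 hmem
      show g (mkCLM (inclusionInDoubleDual ℂ A a)) = 0
      rw [this, map_zero]
    change Φ (inclusionInDoubleDual ℂ A a) = s a at h1
    rw [h2] at h1
    exact h1.symm
  have hΦF : Φ F = 0 := by rw [hs F, hs0, map_zero]
  have hΦF' : Φ F = (‖(Submodule.Quotient.mk F : (Dual ℂ (Dual ℂ A)) ⧸ p)‖ : ℂ) := hg2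
  rw [hΦF] at hΦF'
  have : (Submodule.Quotient.mk F : (Dual ℂ (Dual ℂ A)) ⧸ p) = 0 := by
    have hnorm : ‖(Submodule.Quotient.mk F : (Dual ℂ (Dual ℂ A)) ⧸ p)‖ = 0 := by
      exact_mod_cast hΦF'.symm
    exact norm_eq_zero.1 hnorm
  exact hne this
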